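/- Let H be a real Hilbert space and let B be a nonzero compact operator on H with B* = −B. Then there exist an at most countable index set J, a strictly decreasing family (λ_j)_{j∈J} of positive reals (tending to 0 when J is infinite), and nonzero finite-rank operators B_j on H with B_j* = −B_j, B_j³ = −B_j, and B_j ∘ B_k = 0 for j ≠ k, such that B = Σ_{j∈J} λ_j·B_j with convergence in operator norm; moreover the ranges of the B_j are pairwise orthogonal finite-dimensional subspaces of H of even dimension, and ker B equals the intersection of the subspaces ker B_j. -/

import Mathlib

open scoped RealInnerProductSpace

set_option synthInstance.maxHeartbeats 400000
set_option maxHeartbeats 1000000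

noncomputable section

open scoped Topology
set_option linter.unusedSectionVars false

section AuxLemmas

variable {H : Type*} [NormedAddCommGroup H] [InnerProductSpace ℝ H] [CompleteSpace H]

lemma aux_compact_subseq (f : H →L[ℝ] H) (hf : IsCompactOperator (⇑f))
    (x : ℕ → H) (C : ℝ) (hx : ∀ n, ‖x n‖ ≤ C) :
    ∃ φ : ℕ → ℕ, StrictMono φ ∧ ∃ y, Filter.Tendsto (fun n => f (x (φ n))) Filter.atTop (𝓝 y) := by
  obtain ⟨K, hK, hfK⟩ := hf.image_closedBall_subset_compact (f := (f : H →ₛₗ[RingHom.id ℝ] H)) 1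
  have hmem : ∀ n, f ((1/(C+1)) • x n) ∈ K := by
    intro n
    apply hfK
    refine ⟨(1/(C+1)) • x n, ?_, rfl⟩
    have hC : 0 ≤ C := le_trans (norm_nonneg _) (hx 0)
    simp only [Metric.mem_closedBall, dist_zero_right, norm_smul]
    calc ‖(1/(C+1) : ℝ)‖ * ‖x n‖ ≤ (1/(C+1)) * C := by
          rw [Real.norm_eq_abs, abs_of_pos (by positivity)]
          exact mul_le_mul_of_nonneg_left (hx n) (by positivity)
      _ ≤ 1 := by rw [div_mul_eq_mul_div, mul_comm]; apply div_le_one_of_le₀ <;> linarith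
  obtain ⟨y, -, φ, hφ, hconv⟩ := hK.tendsto_subseq hmem
  refine ⟨φ, hφ, (C+1) • y, ?_⟩
  have : ∀ n, f (x (φ n)) = (C+1) • f ((1/(C+1)) • x (φ n)) := by
    intro n
    have hC : 0 ≤ C := le_trans (norm_nonneg _) (hx 0)
    rw [map_smul, smul_smul]
    rw [mul_one_div, div_self (by positivity), one_smul]
  simp only [this]
  exact (continuous_const_smul ((C:ℝ)+1)).continuousAt.tendsto.comp hconv

lemma aux_cs (T : H →L[ℝ] H) (hsymm : ∀ x y : H, ⟪T x, y⟫ = ⟪x, T y⟫)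
    (hpos : ∀ x : H, 0 ≤ ⟪T x, x⟫) (x y : H) :
    ⟪T x, y⟫ ^ 2 ≤ ⟪T x, x⟫ * ⟪T y, y⟫ := by
  have key : ∀ t : ℝ, 0 ≤ ⟪T y, y⟫ * (t * t) + (2 * ⟪T x, y⟫) * t + ⟪T x, x⟫ := by
    intro t
    have h := hpos (x + t • y)
    have expand : ⟪T (x + t • y), x + t • y⟫
        = ⟪T y, y⟫ * (t * t) + (2 * ⟪T x, y⟫) * t + ⟪T x, x⟫ := by
      have hyx : ⟪T y, x⟫ = ⟪T x, y⟫ := by rw [hsymm, real_inner_comm]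
      simp only [map_add, map_smul, inner_add_left, inner_add_right, real_inner_smul_left,
        real_inner_smul_right, ContinuousLinearMap.map_smul, hyx]
      ring
    rw [expand] at h
    exact h
  have hd := discrim_le_zero key
  rw [discrim] at hd
  nlinarith [hd]

lemma aux_norm_bound (T : H →L[ℝ] H) (hsymm : ∀ x y : H, ⟪T x, y⟫ = ⟪x, T y⟫)
    (hpos : ∀ x : H, 0 ≤ ⟪T x, x⟫) (K : Submodule ℝ H) (hinv : ∀ x ∈ K, T x ∈ K)
    (m : ℝ) (hm : 0 ≤ m) (hub : ∀ x ∈ K, ⟪T x, x⟫ ≤ m * ‖x‖ ^ 2)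
    (x : H) (hx : x ∈ K) : ‖T x‖ ≤ m * ‖x‖ := by
  have h1 := aux_cs T hsymm hpos x (T x)
  have h2 : ⟪T x, x⟫ ≤ m * ‖x‖ ^ 2 := hub x hx
  have h3 : ⟪T (T x), T x⟫ ≤ m * ‖T x‖ ^ 2 := hub (T x) (hinv x hx)
  have h4 : ⟪T x, T x⟫ = ‖T x‖ ^ 2 := real_inner_self_eq_norm_sq (T x)
  have h6 : ‖T x‖ ^ 2 ≤ (m * ‖x‖) ^ 2 := by
    nlinarith [hpos x, hpos (T x), norm_nonneg (T x), norm_nonneg x, sq_nonneg (‖T x‖)]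
  have := Real.sqrt_le_sqrt h6
  rwa [Real.sqrt_sq (norm_nonneg _), Real.sqrt_sq (by positivity)] at this

lemma aux_exists_eigen (T : H →L[ℝ] H) (hTc : IsCompactOperator (⇑T))
    (hsymm : ∀ x y : H, ⟪T x, y⟫ = ⟪x, T y⟫) (hpos : ∀ x : H, 0 ≤ ⟪T x, x⟫)
    (K : Submodule ℝ H) (hKc : IsClosed (K : Set H)) (hinv : ∀ x ∈ K, T x ∈ K)
    (hne : ∃ x ∈ K, T x ≠ 0) :
    ∃ μ : ℝ, 0 < μ ∧ ∃ x ∈ K, x ≠ 0 ∧ T x = μ • x ∧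
      ∀ y ∈ K, ⟪T y, y⟫ ≤ μ * ‖y‖ ^ 2 := by
  obtain ⟨x₀, hx₀K, hx₀⟩ := hne
  have hx₀0 : x₀ ≠ 0 := by rintro rfl; simp at hx₀
  set S : Set ℝ := {r | ∃ x ∈ K, ‖x‖ = 1 ∧ r = ⟪T x, x⟫} with hS
  -- the normalized x₀
  set u : H := ‖x₀‖⁻¹ • x₀ with hu
  have hun : ‖u‖ = 1 := by
    rw [hu, norm_smul, norm_inv, norm_norm, inv_mul_cancel₀ (norm_ne_zero_iff.mpr hx₀0)]
  have huK : u ∈ K := K.smul_mem _ hx₀K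
  have huT : T u ≠ 0 := by
    rw [hu, map_smul]
    simp only [ne_eq, smul_eq_zero, inv_eq_zero, norm_eq_zero]
    push_neg
    exact ⟨hx₀0, hx₀⟩
  have huTu : 0 < ⟪T u, u⟫ := by
    rcases lt_or_eq_of_le (hpos u) with h | h
    · exact h
    -- if ⟪Tu,u⟫ = 0 then Tu = 0 by Cauchy-Schwarz
    · exfalso
      apply huT
      have : ∀ y : H, ⟪T u, y⟫ = 0 := by
        intro y
        have := aux_cs T hsymm hpos u y
        rw [← h] at this
        simp only [zero_mul] at this
        nlinarith [sq_nonneg ⟪T u, y⟫]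
      exact inner_self_eq_zero.mp (this (T u))
  have hSne : S.Nonempty := ⟨⟪T u, u⟫, u, huK, hun, rfl⟩
  have hSbdd : BddAbove S := by
    refine ⟨‖T‖, ?_⟩
    rintro r ⟨x, -, hx1, rfl⟩
    calc ⟪T x, x⟫ ≤ ‖T x‖ * ‖x‖ := real_inner_le_norm _ _
      _ ≤ ‖T‖ * ‖x‖ * ‖x‖ := by
          exact mul_le_mul_of_nonneg_right (T.le_opNorm x) (norm_nonneg x)
      _ = ‖T‖ := by rw [hx1]; ring
  set m : ℝ := sSup S with hm
  have hmpos : 0 < m := lt_of_lt_of_le huTu (le_csSup hSbdd ⟨u, huK, hun, rfl⟩)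
  have hub : ∀ y ∈ K, ⟪T y, y⟫ ≤ m * ‖y‖ ^ 2 := by
    intro y hyK
    rcases eq_or_ne y 0 with rfl | hy0
    · simp
    · have hyn : ‖(‖y‖⁻¹ • y)‖ = 1 := by
        rw [norm_smul, norm_inv, norm_norm, inv_mul_cancel₀ (norm_ne_zero_iff.mpr hy0)]
      have hmem : ⟪T (‖y‖⁻¹ • y), ‖y‖⁻¹ • y⟫ ∈ S := ⟨_, K.smul_mem _ hyK, hyn, rfl⟩
      have hle := le_csSup hSbdd hmem
      rw [map_smul, real_inner_smul_left, real_inner_smul_right] at hle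
      have h2 : ‖y‖⁻¹ * (‖y‖⁻¹ * ⟪T y, y⟫) ≤ m := hle
      have h3 : (0:ℝ) < ‖y‖ := norm_pos_iff.mpr hy0
      calc ⟪T y, y⟫ = ‖y‖ * (‖y‖ * (‖y‖⁻¹ * (‖y‖⁻¹ * ⟪T y, y⟫))) := by
            field_simp
        _ ≤ ‖y‖ * (‖y‖ * m) := by
            apply mul_le_mul_of_nonneg_left _ h3.le
            exact mul_le_mul_of_nonneg_left h2 h3.le
        _ = m * ‖y‖ ^ 2 := by ring
  -- approximating sequence
  have hseq : ∀ n : ℕ, ∃ x : H, x ∈ K ∧ ‖x‖ = 1 ∧ m - 1/(n+1) < ⟪T x, x⟫ := by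
    intro n
    obtain ⟨r, hrS, hr⟩ := exists_lt_of_lt_csSup hSne
      (show m - 1/(n+1) < m by
        have : (0:ℝ) < 1/(n+1) := by positivity
        linarith)
    obtain ⟨x, hxK, hx1, rfl⟩ := hrS
    exact ⟨x, hxK, hx1, hr⟩
  choose z hzK hz1 hzm using hseq
  have hTz : ∀ n, ‖T (z n) - m • z n‖ ^ 2 ≤ 2 * m * (m - ⟪T (z n), z n⟫) := by
    intro n
    have h1 : ‖T (z n)‖ ≤ m := by
      have := aux_norm_bound T hsymm hpos K hinv m hmpos.le hub (z n) (hzK n)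
      rwa [hz1 n, mul_one] at this
    have expand : ‖T (z n) - m • z n‖ ^ 2
        = ‖T (z n)‖ ^ 2 - 2 * m * ⟪T (z n), z n⟫ + m ^ 2 * ‖z n‖ ^ 2 := by
      rw [norm_sub_sq_real, norm_smul, real_inner_smul_right]
      simp only [Real.norm_eq_abs]
      rw [abs_of_pos hmpos]
      ring
    rw [expand, hz1 n]
    nlinarith [hpos (z n), h1, norm_nonneg (T (z n)), sq_nonneg (m - ‖T (z n)‖)]
  have hTzm : Filter.Tendsto (fun n => T (z n) - m • z n) Filter.atTop (𝓝 0) := by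
    rw [tendsto_iff_norm_sub_tendsto_zero]
    simp only [sub_zero]
    have hb : ∀ n : ℕ, ‖T (z n) - m • z n‖ ≤ Real.sqrt (2 * m * (1/(n+1))) := by
      intro n
      have h1 : ‖T (z n) - m • z n‖ ^ 2 ≤ 2 * m * (1/(n+1)) := by
        refine le_trans (hTz n) ?_
        have h2 : m - ⟪T (z n), z n⟫ < 1/(n+1) := by linarith [hzm n]
        nlinarith [hmpos]
      have := Real.sqrt_le_sqrt h1
      rwa [Real.sqrt_sq (norm_nonneg _)] at this
    have hlim : Filter.Tendsto (fun n : ℕ => Real.sqrt (2 * m * (1/(n+1)))) Filter.atTop (𝓝 0) := by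
      have h1 : Filter.Tendsto (fun n : ℕ => (1:ℝ)/(n+1)) Filter.atTop (𝓝 0) :=
        tendsto_one_div_add_atTop_nhds_zero_nat
      have h2 : Filter.Tendsto (fun n : ℕ => 2 * m * (1/(n+1))) Filter.atTop (𝓝 (2 * m * 0)) :=
        h1.const_mul _
      rw [mul_zero] at h2
      have h3 := (Real.continuous_sqrt.continuousAt (x := 0)).tendsto.comp h2
      rwa [Real.sqrt_zero] at h3
    exact squeeze_zero (fun n => norm_nonneg _) hb hlim
  -- extract convergent subsequence
  obtain ⟨φ, hφ, y, hy⟩ := aux_compact_subseq T hTc z 1 (fun n => (hz1 n).le)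
  have hzφ : Filter.Tendsto (fun n => m • z (φ n)) Filter.atTop (𝓝 y) := by
    have h1 : Filter.Tendsto (fun n => T (z (φ n)) - m • z (φ n)) Filter.atTop (𝓝 0) :=
      hTzm.comp hφ.tendsto_atTop
    have h2 := hy.sub h1
    simpa using h2
  set x : H := m⁻¹ • y with hxdef
  have hzx : Filter.Tendsto (fun n => z (φ n)) Filter.atTop (𝓝 x) := by
    have := hzφ.const_smul m⁻¹
    simp only [smul_smul, inv_mul_cancel₀ hmpos.ne', one_smul] at this
    exact this
  have hxK : x ∈ K := hKc.mem_of_tendsto hzx (Filter.Eventually.of_forall (fun n => hzK (φ n)))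
  have hxn : ‖x‖ = 1 := by
    have h1 : Filter.Tendsto (fun n => ‖z (φ n)‖) Filter.atTop (𝓝 ‖x‖) := hzx.norm
    have h2 : Filter.Tendsto (fun n => ‖z (φ n)‖) Filter.atTop (𝓝 1) := by
      simp only [hz1]
      exact tendsto_const_nhds
    exact tendsto_nhds_unique h1 h2
  have hx0 : x ≠ 0 := by
    intro h
    rw [h, norm_zero] at hxn
    norm_num at hxn
  have hTx : T x = m • x := by
    have h1 : Filter.Tendsto (fun n => T (z (φ n))) Filter.atTop (𝓝 (T x)) :=
      (T.continuous.continuousAt.tendsto).comp hzx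
    have h2 : T x = y := tendsto_nhds_unique h1 hy
    rw [h2, hxdef, smul_smul, mul_inv_cancel₀ hmpos.ne', one_smul]
  exact ⟨m, hmpos, x, hxK, hx0, hTx, hub⟩

lemma aux_no_on_family (T : H →L[ℝ] H) (hTc : IsCompactOperator (⇑T))
    (ε : ℝ) (hε : 0 < ε) (e : ℕ → H) (μ : ℕ → ℝ) (hμ : ∀ n, ε ≤ μ n)
    (he1 : ∀ n, ‖e n‖ = 1) (heT : ∀ n, T (e n) = μ n • e n)
    (horth : ∀ m n, m ≠ n → ⟪e m, e n⟫ = 0) : False := by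
  obtain ⟨φ, hφ, y, hy⟩ := aux_compact_subseq T hTc e 1 (fun n => (he1 n).le)
  have hcauchy : CauchySeq (fun n => T (e (φ n))) := hy.cauchySeq
  rw [Metric.cauchySeq_iff'] at hcauchy
  obtain ⟨N, hN⟩ := hcauchy ε hε
  have h1 := hN (N + 1) (by omega)
  rw [dist_eq_norm] at h1
  have hne : φ (N+1) ≠ φ N := fun h => Nat.succ_ne_self N (hφ.injective h)
  have hsep : ε ^ 2 * 2 ≤ ‖T (e (φ (N+1))) - T (e (φ N))‖ ^ 2 := by
    rw [heT, heT, norm_sub_sq_real, norm_smul, norm_smul, real_inner_smul_left,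
      real_inner_smul_right, horth _ _ hne, he1, he1]
    simp only [Real.norm_eq_abs, mul_zero, mul_one]
    have h2 := hμ (φ (N+1)); have h3 := hμ (φ N)
    rw [sq_abs, sq_abs]
    nlinarith [sq_abs (μ (φ (N+1))), sq_abs (μ (φ N))]
  nlinarith [norm_nonneg (T (e (φ (N+1))) - T (e (φ N)))]

/-- Only finitely many eigenvalues `≥ ε`. -/

lemma aux_eigenvalues_finite (T : H →L[ℝ] H) (hTc : IsCompactOperator (⇑T))
    (hsymm : ∀ x y : H, ⟪T x, y⟫ = ⟪x, T y⟫) (ε : ℝ) (hε : 0 < ε) :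
    {μ : ℝ | ε ≤ μ ∧ ∃ x, x ≠ 0 ∧ T x = μ • x}.Finite := by
  by_contra hinf
  replace hinf : {μ : ℝ | ε ≤ μ ∧ ∃ x, x ≠ 0 ∧ T x = μ • x}.Infinite := hinf
  set f := hinf.natEmbedding with hf
  set μ : ℕ → ℝ := fun n => (f n : ℝ) with hμdef
  have hμprop : ∀ n, ε ≤ μ n ∧ ∃ x, x ≠ 0 ∧ T x = μ n • x := fun n => (f n).2
  have hμinj : Function.Injective μ := fun m n h => by
    have := f.injective (Subtype.ext h); exact this
  choose x hx0 hxT using fun n => (hμprop n).2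
  set e : ℕ → H := fun n => ‖x n‖⁻¹ • x n with he
  have he1 : ∀ n, ‖e n‖ = 1 := fun n => by
    rw [he]; simp only []
    rw [norm_smul, norm_inv, norm_norm, inv_mul_cancel₀ (norm_ne_zero_iff.mpr (hx0 n))]
  have heT : ∀ n, T (e n) = μ n • e n := fun n => by
    show T (‖x n‖⁻¹ • x n) = μ n • (‖x n‖⁻¹ • x n)
    rw [map_smul, hxT n, smul_comm]
  have horth : ∀ m n, m ≠ n → ⟪e m, e n⟫ = 0 := by
    intro m n hmn
    have key : ⟪x m, x n⟫ = 0 := by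
      have h1 : μ m * ⟪x m, x n⟫ = μ n * ⟪x m, x n⟫ := by
        calc μ m * ⟪x m, x n⟫ = ⟪μ m • x m, x n⟫ := (real_inner_smul_left _ _ _).symm
          _ = ⟪T (x m), x n⟫ := by rw [hxT]
          _ = ⟪x m, T (x n)⟫ := hsymm _ _
          _ = ⟪x m, μ n • x n⟫ := by rw [hxT]
          _ = μ n * ⟪x m, x n⟫ := real_inner_smul_right _ _ _
      by_contra hc
      exact hμinj.ne hmn (mul_right_cancel₀ hc h1)
    rw [he]; simp only [real_inner_smul_left, real_inner_smul_right, key, mul_zero]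
  exact aux_no_on_family T hTc ε hε e μ (fun n => (hμprop n).1) he1 heT horth

/-- Eigenspaces for nonzero eigenvalues of a compact operator are finite dimensional. -/

lemma aux_eigenspace_findim (T : H →L[ℝ] H) (hTc : IsCompactOperator (⇑T))
    (μ : ℝ) (hμ : 0 < μ) (E : Submodule ℝ H) (hEc : IsClosed (E : Set H))
    (hE : ∀ x ∈ E, T x = μ • x) : FiniteDimensional ℝ E := by
  haveI : CompleteSpace E := hEc.completeSpace_coe
  obtain ⟨w, b, hb⟩ := exists_hilbertBasis ℝ E
  rcases w.finite_or_infinite with hfin | hinf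
  · -- finite Hilbert basis: E is spanned by it
    have hdense := b.dense_span
    rw [hb] at hdense
    have hrange : Set.range ((↑) : w → E) = w := Subtype.range_coe
    haveI hfd : FiniteDimensional ℝ (Submodule.span ℝ (Set.range ((↑) : w → E))) := by
      rw [hrange]; exact FiniteDimensional.span_of_finite ℝ hfin
    have hclosed : IsClosed ((Submodule.span ℝ (Set.range ((↑) : w → E)) : Submodule ℝ E) : Set E) :=
      Submodule.closed_of_finiteDimensional _
    have hspan : Submodule.span ℝ (Set.range ((↑) : w → E)) = ⊤ := by
      rw [← hclosed.submodule_topologicalClosure_eq]; exact hdense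
    haveI : FiniteDimensional ℝ (⊤ : Submodule ℝ E) := hspan ▸ hfd
    exact (Submodule.topEquiv (R := ℝ) (M := E)).finiteDimensional
  · -- infinite: extract ℕ-indexed orthonormal family, contradiction
    haveI := hinf.to_subtype
    set g : ℕ → w := fun n => (Set.Infinite.natEmbedding _ hinf) n with hg
    set e : ℕ → H := fun n => ((g n : E) : H) with he
    have he1 : ∀ n, ‖e n‖ = 1 := by
      intro n
      have := b.orthonormal.1 (g n)
      rw [hb] at this
      simpa [he] using this
    have horth : ∀ m n, m ≠ n → ⟪e m, e n⟫ = 0 := by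
      intro m n hmn
      have hgne : g m ≠ g n := fun h => hmn ((Set.Infinite.natEmbedding _ hinf).injective h)
      have := b.orthonormal.2 hgne
      rw [hb] at this
      simpa [he, Submodule.coe_inner] using this
    have heT : ∀ n, T (e n) = μ • e n := fun n => hE _ (g n : E).2
    exact absurd (aux_no_on_family T hTc μ hμ e (fun _ => μ) (fun _ => le_refl μ) he1 heT horth) id

end AuxLemmas

/-- Spectral decomposition of a nonzero compact skew-adjoint operator on a real Hilbert
space: `B = Σ_j λ_j • B_j` (norm-convergent), where the `λ_j` are distinct positive reals
with only finitely many above each `ε > 0` (i.e. a strictly decreasing family tending to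
`0` when infinite), and the `B_j` are nonzero finite-rank skew-adjoint operators with
`B_j³ = -B_j`, `B_j ∘ B_k = 0` for `j ≠ k`, pairwise orthogonal even-dimensional ranges,
and `ker B = ⋂_j ker B_j`. -/
theorem compact_skew_adjoint_spectral_decomposition
    {H : Type*} [NormedAddCommGroup H] [InnerProductSpace ℝ H] [CompleteSpace H]
    (B : H →L[ℝ] H) (hB0 : B ≠ 0) (hBcompact : IsCompactOperator (⇑B))
    (hBskew : ContinuousLinearMap.adjoint B = -B) :
    ∃ (J : Type) (_ : Countable J) (lam : J → ℝ) (Bop : J → H →L[ℝ] H),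
      (∀ j, 0 < lam j) ∧
      Function.Injective lam ∧
      (∀ ε : ℝ, 0 < ε → {j | ε ≤ lam j}.Finite) ∧
      (∀ j, Bop j ≠ 0) ∧
      (∀ j, ContinuousLinearMap.adjoint (Bop j) = -(Bop j)) ∧
      (∀ j, Bop j * Bop j * Bop j = -(Bop j)) ∧
      (∀ j k, j ≠ k → Bop j ∘L Bop k = 0) ∧
      HasSum (fun j => lam j • Bop j) B ∧
      (∀ j, FiniteDimensional ℝ (LinearMap.range (Bop j : H →ₗ[ℝ] H))) ∧
      (∀ j, Even (Module.finrank ℝ (LinearMap.range (Bop j : H →ₗ[ℝ] H)))) ∧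
      (∀ j k, j ≠ k → ∀ x ∈ LinearMap.range (Bop j : H →ₗ[ℝ] H), ∀ y ∈ LinearMap.range (Bop k : H →ₗ[ℝ] H),
        ⟪x, y⟫ = 0) ∧
      LinearMap.ker (B : H →ₗ[ℝ] H) = ⨅ j, LinearMap.ker (Bop j : H →ₗ[ℝ] H) := by
  classical
  set T : H →L[ℝ] H := -(B ∘L B) with hTdef
  have hTapp : ∀ x, T x = -(B (B x)) := fun x => rfl
  have hBinner : ∀ x y : H, ⟪B x, y⟫ = -⟪x, B y⟫ := by
    intro x y
    have h := ContinuousLinearMap.adjoint_inner_right B x y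
    rw [hBskew] at h
    simpa using h.symm
  have hTB : ∀ x, ⟪T x, x⟫ = ‖B x‖ ^ 2 := by
    intro x
    rw [hTapp, inner_neg_left, hBinner, neg_neg, real_inner_self_eq_norm_sq]
  have hTsymm : ∀ x y : H, ⟪T x, y⟫ = ⟪x, T y⟫ := by
    intro x y
    rw [hTapp, hTapp, inner_neg_left, inner_neg_right]
    rw [hBinner (B x) y, neg_neg, hBinner x (B y)]
  have hTpos : ∀ x : H, 0 ≤ ⟪T x, x⟫ := fun x => by rw [hTB]; positivity
  have hTc : IsCompactOperator (⇑T) := by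
    have h := (hBcompact.continuous_comp B.continuous).neg
    have he : ⇑T = -(⇑B ∘ ⇑B) := rfl
    rw [he]; exact h
  have hkerTB : ∀ x : H, T x = 0 ↔ B x = 0 := by
    intro x
    constructor
    · intro h
      have h2 : ‖B x‖ ^ 2 = 0 := by rw [← hTB x, h, inner_zero_left]
      exact norm_eq_zero.mp (sq_eq_zero_iff.mp h2)
    · intro h; rw [hTapp, h, map_zero, neg_zero]
  -- eigenspaces
  set E : ℝ → Submodule ℝ H := fun μ => LinearMap.ker ((T - μ • (1 : H →L[ℝ] H) : H →L[ℝ] H) : H →ₗ[ℝ] H) with hEdef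
  have hEmem : ∀ μ (x : H), x ∈ E μ ↔ T x = μ • x := by
    intro μ x
    simp only [hEdef, LinearMap.mem_ker, ContinuousLinearMap.coe_coe, ContinuousLinearMap.coe_sub', Pi.sub_apply,
      ContinuousLinearMap.coe_smul', Pi.smul_apply, ContinuousLinearMap.one_apply, sub_eq_zero]
  have hEclosed : ∀ μ, IsClosed ((E μ : Submodule ℝ H) : Set H) := by
    intro μ
    exact ContinuousLinearMap.isClosed_ker _
  haveI hEcomplete : ∀ μ, CompleteSpace (E μ) := fun μ => (hEclosed μ).completeSpace_coe
  -- orthogonal projections onto eigenspaces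
  set P : ℝ → (H →L[ℝ] H) := fun μ =>
    haveI := hEcomplete μ
    (E μ).subtypeL ∘L Submodule.orthogonalProjection (E μ) with hPdef
  have hPapp : ∀ μ x, P μ x = haveI := hEcomplete μ; (Submodule.orthogonalProjection (E μ) x : H) :=
    fun μ x => rfl
  have hPmem : ∀ μ x, P μ x ∈ E μ := fun μ x => by
    rw [hPapp]; exact (Submodule.orthogonalProjection (E μ) x).2
  have hPid : ∀ μ, ∀ x ∈ E μ, P μ x = x := fun μ x hx => by
    rw [hPapp]; exact Submodule.starProjection_eq_self_iff.mpr hx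
  have hPsub : ∀ μ x, x - P μ x ∈ (E μ)ᗮ := fun μ x => by
    haveI := hEcomplete μ
    exact Submodule.sub_starProjection_mem_orthogonal x
  have hPzero : ∀ μ, ∀ x ∈ (E μ)ᗮ, P μ x = 0 := fun μ x hx => by
    rw [hPapp]
    haveI := hEcomplete μ
    rw [Submodule.orthogonalProjectionOnto_apply_of_mem_orthogonal hx]
    rfl
  have hPsa : ∀ μ (x y : H), ⟪P μ x, y⟫ = ⟪x, P μ y⟫ := by
    intro μ x y
    haveI := hEcomplete μ
    rw [hPapp, hPapp]
    exact Submodule.inner_starProjection_left_eq_right (E μ) x y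
  -- B and T preserve eigenspaces and their complements
  have hBT : ∀ x, B (T x) = T (B x) := by
    intro x; rw [hTapp, hTapp, map_neg]
  have hBE : ∀ μ, ∀ x ∈ E μ, B x ∈ E μ := by
    intro μ x hx
    rw [hEmem] at hx ⊢
    rw [← hBT, hx, map_smul]
  have hBEorth : ∀ μ, ∀ x ∈ (E μ)ᗮ, B x ∈ (E μ)ᗮ := by
    intro μ x hx
    intro y hy
    have h1 : ⟪B y, x⟫ = 0 := hx (B y) (hBE μ y hy)
    have h2 := hBinner y x
    rw [h1] at h2
    linarith
  have hTE : ∀ μ, ∀ x ∈ E μ, T x ∈ E μ := by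
    intro μ x hx
    rw [hEmem] at hx
    rw [hEmem, hx, map_smul, hx]
  have hTEorth : ∀ μ, ∀ x ∈ (E μ)ᗮ, T x ∈ (E μ)ᗮ := by
    intro μ x hx y hy
    rw [← hTsymm y x]
    exact hx (T y) (hTE μ y hy)
  have hPB : ∀ μ x, P μ (B x) = B (P μ x) := by
    intro μ x
    have hdecomp : B x = B (P μ x) + B (x - P μ x) := by
      rw [← map_add]
      congr 1
      abel
    rw [hdecomp, map_add, hPid μ _ (hBE μ _ (hPmem μ x)),
      hPzero μ _ (hBEorth μ _ (hPsub μ x)), add_zero]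
  have hBinj : ∀ μ, 0 < μ → ∀ x ∈ E μ, B x = 0 → x = 0 := by
    intro μ hμ x hx hBx
    rw [hEmem] at hx
    have h : T x = 0 := (hkerTB x).mpr hBx
    rw [h] at hx
    have := hx.symm
    rw [smul_eq_zero] at this
    rcases this with h1 | h1
    · exact absurd h1 hμ.ne'
    · exact h1
  -- orthogonality of distinct eigenspaces
  have hEorth : ∀ μ ν : ℝ, μ ≠ ν → ∀ x ∈ E μ, ∀ y ∈ E ν, ⟪x, y⟫ = 0 := by
    intro μ ν hμν x hx y hy
    rw [hEmem] at hx hy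
    have h1 : μ * ⟪x, y⟫ = ν * ⟪x, y⟫ := by
      calc μ * ⟪x, y⟫ = ⟪μ • x, y⟫ := (real_inner_smul_left _ _ _).symm
        _ = ⟪T x, y⟫ := by rw [hx]
        _ = ⟪x, T y⟫ := hTsymm x y
        _ = ⟪x, ν • y⟫ := by rw [hy]
        _ = ν * ⟪x, y⟫ := real_inner_smul_right _ _ _
    by_contra hc
    exact hμν (mul_right_cancel₀ hc h1)
  have hEfd : ∀ μ : ℝ, 0 < μ → FiniteDimensional ℝ (E μ) := fun μ hμ =>
    aux_eigenspace_findim T hTc μ hμ (E μ) (hEclosed μ) (fun x hx => (hEmem μ x).mp hx)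
  have hsqinj : ∀ a b : ℝ, 0 < a → 0 < b → a ^ 2 = b ^ 2 → a = b := by
    intro a b ha hb h
    by_contra hne
    rcases lt_or_gt_of_ne hne with h' | h' <;> nlinarith
  -- the index set
  set Jset : Set ℝ := {l : ℝ | 0 < l ∧ E (l ^ 2) ≠ ⊥} with hJsetdef
  set lam : Jset → ℝ := fun j => (j : ℝ) with hlamdef
  set Bop : Jset → (H →L[ℝ] H) := fun j => ((j : ℝ))⁻¹ • (B ∘L P ((j : ℝ) ^ 2)) with hBopdef
  have hlam_pos : ∀ j : Jset, 0 < lam j := fun j => j.2.1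
  have hlam_inj : Function.Injective lam := fun a b h => Subtype.ext h
  have hBopapp : ∀ (j : Jset) (x : H), Bop j x = ((j:ℝ))⁻¹ • B (P ((j:ℝ) ^ 2) x) :=
    fun j x => rfl
  -- finiteness of large eigenvalues
  have hfinite : ∀ ε : ℝ, 0 < ε → {j : Jset | ε ≤ lam j}.Finite := by
    intro ε hε
    have hfin := aux_eigenvalues_finite T hTc hTsymm (ε ^ 2) (by positivity)
    apply Set.Finite.of_finite_image (f := fun j : Jset => (j : ℝ) ^ 2)
    · apply hfin.subset
      rintro μ ⟨j, hj, rfl⟩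
      have hj' : ε ≤ (j:ℝ) := hj
      have hp : (0:ℝ) < (j:ℝ) := hlam_pos j
      refine ⟨show ε^2 ≤ (j:ℝ)^2 by nlinarith, ?_⟩
      obtain ⟨x, hx, hx0⟩ := Submodule.exists_mem_ne_zero_of_ne_bot j.2.2
      exact ⟨x, hx0, (hEmem _ x).mp hx⟩
    · rintro a - b - h
      exact Subtype.ext (hsqinj _ _ (hlam_pos a) (hlam_pos b) h)
  -- countability
  haveI hcount : Countable Jset := by
    rw [Set.countable_coe_iff]
    have : Jset ⊆ ⋃ n : ℕ, {l : ℝ | l ∈ Jset ∧ 1 / (n + 1) ≤ l} := by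
      intro l hl
      obtain ⟨n, hn⟩ := exists_nat_one_div_lt hl.1
      exact Set.mem_iUnion.mpr ⟨n, hl, hn.le⟩
    refine Set.Countable.mono this (Set.countable_iUnion fun n => ?_)
    have h := hfinite (1 / (n + 1)) (by positivity)
    have h2 : {l : ℝ | l ∈ Jset ∧ 1 / ((n:ℝ) + 1) ≤ l}
        = Subtype.val '' {j : Jset | 1 / ((n:ℝ) + 1) ≤ lam j} := by
      ext l
      constructor
      · rintro ⟨hl, hle⟩; exact ⟨⟨l, hl⟩, hle, rfl⟩
      · rintro ⟨j, hj, rfl⟩; exact ⟨j.2, hj⟩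
    rw [h2]
    exact (h.image _).countable
  -- nonzero
  have hBop_ne : ∀ j : Jset, Bop j ≠ 0 := by
    intro j h
    obtain ⟨x, hx, hx0⟩ := Submodule.exists_mem_ne_zero_of_ne_bot j.2.2
    have h1 : Bop j x = 0 := by rw [h]; rfl
    rw [hBopapp, hPid _ x hx] at h1
    have h2 : B x ≠ 0 := fun hB => hx0 (hBinj _ (pow_pos (hlam_pos j) 2) x hx hB)
    rw [smul_eq_zero] at h1
    rcases h1 with h1 | h1
    · exact (inv_ne_zero (hlam_pos j).ne') h1
    · exact h2 h1
  -- skew-adjointness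
  have hBop_skew : ∀ j : Jset, ContinuousLinearMap.adjoint (Bop j) = -(Bop j) := by
    intro j
    have h : -(Bop j) = ContinuousLinearMap.adjoint (Bop j) := by
      rw [ContinuousLinearMap.eq_adjoint_iff]
      intro x y
      rw [ContinuousLinearMap.neg_apply, inner_neg_left, hBopapp, hBopapp,
        real_inner_smul_left, real_inner_smul_right, hBinner, hPsa]
      rw [show ⟪x, P ((j:ℝ) ^ 2) (B y)⟫ = ⟪x, B (P ((j:ℝ) ^ 2) y)⟫ from by rw [hPB]]
      ring
    exact h.symm
  -- cube identity
  have hBBE : ∀ (j : Jset) (x : H), B (B (P ((j:ℝ)^2) x)) = -((j:ℝ)^2) • P ((j:ℝ)^2) x := by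
    intro j x
    have h1 : T (P ((j:ℝ)^2) x) = ((j:ℝ)^2) • P ((j:ℝ)^2) x := (hEmem _ _).mp (hPmem _ x)
    have h2 := hTapp (P ((j:ℝ)^2) x)
    have h3 : B (B (P ((j:ℝ)^2) x)) = -(T (P ((j:ℝ)^2) x)) := by rw [h2, neg_neg]
    rw [h3, h1, neg_smul]
  have hBop_cube : ∀ j : Jset, Bop j * Bop j * Bop j = -(Bop j) := by
    intro j
    ext x
    show Bop j (Bop j (Bop j x)) = -(Bop j x)
    have hl0 : ((j:ℝ)) ≠ 0 := (hlam_pos j).ne'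
    have happ : ∀ y : H, Bop j y = ((j:ℝ))⁻¹ • B (P ((j:ℝ)^2) y) := hBopapp j
    have e1 : P ((j:ℝ)^2) (B (P ((j:ℝ)^2) x)) = B (P ((j:ℝ)^2) x) :=
      hPid _ _ (hBE _ _ (hPmem _ x))
    have e2 : P ((j:ℝ)^2) (B (B (P ((j:ℝ)^2) x))) = B (B (P ((j:ℝ)^2) x)) :=
      hPid _ _ (hBE _ _ (hBE _ _ (hPmem _ x)))
    have e3 := hBBE j x
    calc Bop j (Bop j (Bop j x))
        = ((j:ℝ))⁻¹ • Bop j (Bop j (B (P ((j:ℝ)^2) x))) := by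
          rw [happ x, map_smul, map_smul]
      _ = ((j:ℝ))⁻¹ • ((j:ℝ))⁻¹ • Bop j (B (B (P ((j:ℝ)^2) x))) := by
          rw [happ (B (P ((j:ℝ)^2) x)), e1, map_smul]
      _ = ((j:ℝ))⁻¹ • ((j:ℝ))⁻¹ • ((j:ℝ))⁻¹ • B (B (B (P ((j:ℝ)^2) x))) := by
          rw [happ (B (B (P ((j:ℝ)^2) x))), e2]
      _ = (((j:ℝ))⁻¹ * (((j:ℝ))⁻¹ * (((j:ℝ))⁻¹ * (-((j:ℝ)^2))))) • B (P ((j:ℝ)^2) x) := by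
          rw [e3, map_smul, smul_smul, smul_smul, smul_smul]
          congr 1
          ring
      _ = -(((j:ℝ))⁻¹ • B (P ((j:ℝ)^2) x)) := by
          have hsc : ((j:ℝ))⁻¹ * (((j:ℝ))⁻¹ * (((j:ℝ))⁻¹ * (-((j:ℝ)^2)))) = -((j:ℝ))⁻¹ := by
            field_simp
          rw [hsc, neg_smul]
      _ = -(Bop j x) := by rw [happ x]
  -- compositions vanish
  have hPP : ∀ j k : Jset, j ≠ k → ∀ x, P ((j:ℝ)^2) (P ((k:ℝ)^2) x) = 0 := by
    intro j k hjk x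
    apply hPzero
    intro u hu
    exact hEorth _ _ (fun h => hjk (Subtype.ext (hsqinj _ _ (hlam_pos j) (hlam_pos k) h)))
      u hu _ (hPmem _ x)
  have hBop_comp : ∀ j k : Jset, j ≠ k → Bop j ∘L Bop k = 0 := by
    intro j k hjk
    ext x
    show Bop j (Bop k x) = 0
    rw [hBopapp, hBopapp, map_smul, map_smul]
    rw [show P ((j:ℝ)^2) (B (P ((k:ℝ)^2) x)) = B (P ((j:ℝ)^2) (P ((k:ℝ)^2) x)) from hPB _ _,
      hPP j k hjk]
    simp
  -- the common kernel
  have hKinf : ∀ x : H, (∀ j : Jset, x ∈ (E ((j:ℝ)^2))ᗮ) → T x = 0 := by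
    intro x₀ hx₀
    set Kinf : Submodule ℝ H := ⨅ j : Jset, (E ((j:ℝ)^2))ᗮ with hKinfdef
    have hmem : ∀ y : H, y ∈ Kinf ↔ ∀ j : Jset, y ∈ (E ((j:ℝ)^2))ᗮ := fun y =>
      Submodule.mem_iInf _
    have hclosed : IsClosed (Kinf : Set H) := by
      rw [hKinfdef, Submodule.coe_iInf]
      exact isClosed_iInter fun j => (E ((j:ℝ)^2)).isClosed_orthogonal
    have hinv : ∀ y ∈ Kinf, T y ∈ Kinf := by
      intro y hy
      rw [hmem] at hy ⊢
      exact fun j => hTEorth _ _ (hy j)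
    by_contra hTx
    have hne : ∃ y ∈ Kinf, T y ≠ 0 := ⟨x₀, (hmem x₀).mpr hx₀, hTx⟩
    obtain ⟨μ, hμ, x, hxK, hx0, hxeig, -⟩ :=
      aux_exists_eigen T hTc hTsymm hTpos Kinf hclosed hinv hne
    have hl : (0:ℝ) < Real.sqrt μ := Real.sqrt_pos.mpr hμ
    have hl2 : Real.sqrt μ ^ 2 = μ := Real.sq_sqrt hμ.le
    have hxE : x ∈ E (Real.sqrt μ ^ 2) := by rw [hEmem, hl2]; exact hxeig
    have hnb : E (Real.sqrt μ ^ 2) ≠ ⊥ := Submodule.ne_bot_iff _ |>.mpr ⟨x, hxE, hx0⟩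
    set j : Jset := ⟨Real.sqrt μ, hl, hnb⟩ with hjdef
    have hxorth : x ∈ (E ((Real.sqrt μ)^2))ᗮ := (hmem x).mp hxK j
    exact hx0 (inner_self_eq_zero.mp (hxorth x hxE))
  -- kernel identity
  have hker : LinearMap.ker (B : H →ₗ[ℝ] H) = ⨅ j : Jset, LinearMap.ker (Bop j : H →ₗ[ℝ] H) := by
    apply le_antisymm
    · intro x hx
      rw [LinearMap.mem_ker] at hx
      rw [Submodule.mem_iInf]
      intro j
      rw [LinearMap.mem_ker]
      have hxorth : x ∈ (E ((j:ℝ)^2))ᗮ := by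
        intro u hu
        have hμ : ((j:ℝ)^2) ≠ 0 := (pow_pos (hlam_pos j) 2).ne'
        have h1 : ((j:ℝ)^2) * ⟪u, x⟫ = 0 := by
          have hTu : T u = ((j:ℝ)^2) • u := (hEmem _ u).mp hu
          calc ((j:ℝ)^2) * ⟪u, x⟫ = ⟪T u, x⟫ := by rw [hTu, real_inner_smul_left]
            _ = ⟪u, T x⟫ := hTsymm u x
            _ = 0 := by rw [(hkerTB x).mpr hx, inner_zero_right]
        exact (mul_eq_zero.mp h1).resolve_left hμ
      rw [ContinuousLinearMap.coe_coe, hBopapp, hPzero _ _ hxorth, map_zero, smul_zero]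
    · intro x hx
      rw [Submodule.mem_iInf] at hx
      rw [LinearMap.mem_ker]
      have hPx0 : ∀ j : Jset, P ((j:ℝ)^2) x = 0 := by
        intro j
        have h1 := hx j
        rw [LinearMap.mem_ker, ContinuousLinearMap.coe_coe, hBopapp, smul_eq_zero] at h1
        have h2 : B (P ((j:ℝ)^2) x) = 0 :=
          h1.resolve_left (inv_ne_zero (hlam_pos j).ne')
        exact hBinj _ (pow_pos (hlam_pos j) 2) _ (hPmem _ x) h2
      have hxorth : ∀ j : Jset, x ∈ (E ((j:ℝ)^2))ᗮ := by
        intro j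
        have := hPsub ((j:ℝ)^2) x
        rwa [hPx0 j, sub_zero] at this
      exact (hkerTB x).mp (hKinf x hxorth)
  -- the tail bound
  have htail : ∀ ε : ℝ, 0 < ε → ∀ F : Finset Jset, (∀ j : Jset, ε ≤ lam j → j ∈ F) →
      ‖B - ∑ j ∈ F, lam j • Bop j‖ ≤ ε := by
    intro ε hε F hF
    set KF : Submodule ℝ H := ⨅ j ∈ F, (E ((j:ℝ)^2))ᗮ with hKFdef
    have hmemKF : ∀ y : H, y ∈ KF ↔ ∀ j ∈ F, y ∈ (E ((j:ℝ)^2))ᗮ := by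
      intro y
      simp only [hKFdef, Submodule.mem_iInf]
    have hclosed : IsClosed (KF : Set H) := by
      rw [hKFdef, Submodule.coe_iInf]
      refine isClosed_iInter fun j => ?_
      rw [Submodule.coe_iInf]
      exact isClosed_iInter fun _ => (E ((j:ℝ)^2)).isClosed_orthogonal
    have hinv : ∀ y ∈ KF, T y ∈ KF := by
      intro y hy
      rw [hmemKF] at hy ⊢
      exact fun j hj => hTEorth _ _ (hy j hj)
    -- the Rayleigh quotient bound on KF
    have hray : ∀ y ∈ KF, ⟪T y, y⟫ ≤ ε ^ 2 * ‖y‖ ^ 2 := by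
      by_cases hz : ∃ y ∈ KF, T y ≠ 0
      · obtain ⟨μ, hμ, x, hxK, hx0, hxeig, hub⟩ :=
          aux_exists_eigen T hTc hTsymm hTpos KF hclosed hinv hz
        have hμε : μ < ε ^ 2 := by
          by_contra hc
          push_neg at hc
          have hl : (0:ℝ) < Real.sqrt μ := Real.sqrt_pos.mpr hμ
          have hl2 : Real.sqrt μ ^ 2 = μ := Real.sq_sqrt hμ.le
          have hxE : x ∈ E (Real.sqrt μ ^ 2) := by rw [hEmem, hl2]; exact hxeig
          have hnb : E (Real.sqrt μ ^ 2) ≠ ⊥ := Submodule.ne_bot_iff _ |>.mpr ⟨x, hxE, hx0⟩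
          set j : Jset := ⟨Real.sqrt μ, hl, hnb⟩ with hjdef
          have hjε : ε ≤ lam j := by
            have : ε = Real.sqrt (ε^2) := (Real.sqrt_sq hε.le).symm
            rw [this]
            exact Real.sqrt_le_sqrt hc
          have hjF : j ∈ F := hF j hjε
          have hxorth : x ∈ (E ((j:ℝ)^2))ᗮ := (hmemKF x).mp hxK j hjF
          exact hx0 (inner_self_eq_zero.mp (hxorth x hxE))
        intro y hy
        have := hub y hy
        nlinarith [sq_nonneg ‖y‖]
      · push_neg at hz
        intro y hy
        rw [hz y hy, inner_zero_left]
        positivity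
    -- pointwise bound
    have hpt : ∀ x : H, ‖B x - (∑ j ∈ F, lam j • Bop j) x‖ ≤ ε * ‖x‖ := by
      intro x
      set s : H := ∑ j ∈ F, P ((j:ℝ)^2) x with hsdef
      set q : H := x - s with hqdef
      have hqKF : q ∈ KF := by
        rw [hmemKF]
        intro k hk u hu
        have h1 : ∀ j ∈ F, j ≠ k → ⟪u, P ((j:ℝ)^2) x⟫ = 0 := by
          intro j _ hjk
          have hne : ((k:ℝ)^2) ≠ ((j:ℝ)^2) := fun h =>
            hjk.symm (Subtype.ext (hsqinj _ _ (hlam_pos k) (hlam_pos j) h))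
          exact hEorth _ _ hne u hu _ (hPmem _ x)
        have h2 : ⟪u, P ((k:ℝ)^2) x⟫ = ⟪u, x⟫ := by
          have h3 := hPsub ((k:ℝ)^2) x
          have h4 : ⟪u, x - P ((k:ℝ)^2) x⟫ = 0 := h3 u hu
          rw [inner_sub_right] at h4
          linarith
        have h5 : ⟪u, s⟫ = ⟪u, x⟫ := by
          rw [hsdef, inner_sum]
          rw [Finset.sum_eq_single k]
          · exact h2
          · intro j hj hjk
            exact h1 j hj hjk
          · intro hkF
            exact absurd hk hkF
        rw [hqdef, inner_sub_right, h5, sub_self]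
      have hqs : ⟪q, s⟫ = 0 := by
        rw [hsdef, inner_sum]
        apply Finset.sum_eq_zero
        intro j hj
        rw [real_inner_comm]
        exact ((hmemKF q).mp hqKF j hj) (P ((j:ℝ)^2) x) (hPmem _ x)
      have hqx : ‖q‖ ≤ ‖x‖ := by
        have hx2 : ‖x‖ ^ 2 = ‖q‖ ^ 2 + ‖s‖ ^ 2 := by
          have : x = q + s := by rw [hqdef]; abel
          rw [this, norm_add_sq_real, hqs]
          ring
        have h6 : ‖q‖ ^ 2 ≤ ‖x‖ ^ 2 := by nlinarith [sq_nonneg ‖s‖]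
        have := Real.sqrt_le_sqrt h6
        rwa [Real.sqrt_sq (norm_nonneg _), Real.sqrt_sq (norm_nonneg _)] at this
      have hBq : B x - (∑ j ∈ F, lam j • Bop j) x = B q := by
        have h7 : ∀ j : Jset, (lam j • Bop j) x = B (P ((j:ℝ)^2) x) := by
          intro j
          rw [ContinuousLinearMap.smul_apply, hBopapp, smul_smul,
            mul_inv_cancel₀ (hlam_pos j).ne', one_smul]
        rw [ContinuousLinearMap.sum_apply]
        rw [Finset.sum_congr rfl (fun j _ => h7 j)]
        rw [hqdef, map_sub, hsdef, map_sum]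
      have hBqn : ‖B q‖ ≤ ε * ‖q‖ := by
        have h8 : ‖B q‖ ^ 2 = ⟪T q, q⟫ := (hTB q).symm
        have h9 : ⟪T q, q⟫ ≤ ε ^ 2 * ‖q‖ ^ 2 := hray q hqKF
        have h10 : ‖B q‖ ^ 2 ≤ (ε * ‖q‖) ^ 2 := by rw [h8]; nlinarith
        have := Real.sqrt_le_sqrt h10
        rwa [Real.sqrt_sq (norm_nonneg _), Real.sqrt_sq (by positivity)] at this
      calc ‖B x - (∑ j ∈ F, lam j • Bop j) x‖ = ‖B q‖ := by rw [hBq]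
        _ ≤ ε * ‖q‖ := hBqn
        _ ≤ ε * ‖x‖ := by nlinarith [hqx, hε.le]
    apply ContinuousLinearMap.opNorm_le_bound _ hε.le
    intro x
    rw [ContinuousLinearMap.sub_apply]
    exact hpt x
  -- summability
  have hsum : HasSum (fun j : Jset => lam j • Bop j) B := by
    rw [HasSum, SummationFilter.unconditional_filter, Metric.tendsto_atTop]
    intro ε hε
    refine ⟨(hfinite (ε/2) (by positivity)).toFinset, fun F hFF => ?_⟩
    have hF : ∀ j : Jset, ε/2 ≤ lam j → j ∈ F := by
      intro j hj
      exact hFF ((hfinite (ε/2) (by positivity)).mem_toFinset.mpr hj)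
    have := htail (ε/2) (by positivity) F hF
    rw [dist_eq_norm, ← norm_neg]
    have hne : -(∑ j ∈ F, lam j • Bop j - B) = B - ∑ j ∈ F, lam j • Bop j := by abel
    rw [hne]
    linarith
  -- range identification
  have hrange : ∀ j : Jset, LinearMap.range (Bop j : H →ₗ[ℝ] H) = E ((j:ℝ)^2) := by
    intro j
    apply le_antisymm
    · rintro _ ⟨x, rfl⟩
      rw [ContinuousLinearMap.coe_coe, hBopapp]
      exact (E _).smul_mem _ (hBE _ _ (hPmem _ x))
    · intro y hy
      haveI := hEfd ((j:ℝ)^2) (pow_pos (hlam_pos j) 2)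
      set f : E ((j:ℝ)^2) →ₗ[ℝ] E ((j:ℝ)^2) :=
        (B : H →ₗ[ℝ] H).restrict (hBE ((j:ℝ)^2)) with hfdef
      have hfapp : ∀ z : E ((j:ℝ)^2), (f z : H) = B (z : H) := fun z => rfl
      have hfinj : Function.Injective f := by
        intro a b hab
        have h1 : B ((a:H) - (b:H)) = 0 := by
          rw [map_sub, sub_eq_zero]
          exact congrArg Subtype.val hab
        have h2 : (a:H) - (b:H) ∈ E ((j:ℝ)^2) := Submodule.sub_mem _ a.2 b.2
        have h3 := hBinj _ (pow_pos (hlam_pos j) 2) _ h2 h1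
        exact Subtype.ext (by rw [← sub_eq_zero]; exact h3)
      have hfsurj := (LinearMap.injective_iff_surjective).mp hfinj
      obtain ⟨z, hz⟩ := hfsurj ⟨y, hy⟩
      refine ⟨(j:ℝ) • (z:H), ?_⟩
      rw [ContinuousLinearMap.coe_coe, hBopapp, map_smul, hPid _ _ z.2, map_smul, smul_smul,
        inv_mul_cancel₀ (hlam_pos j).ne', one_smul]
      rw [← hfapp z, hz]
  -- even dimension
  have heven : ∀ j : Jset, Even (Module.finrank ℝ (E ((j:ℝ)^2))) := by
    intro j
    haveI := hEfd ((j:ℝ)^2) (pow_pos (hlam_pos j) 2)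
    set f : E ((j:ℝ)^2) →ₗ[ℝ] E ((j:ℝ)^2) :=
      (B : H →ₗ[ℝ] H).restrict (hBE ((j:ℝ)^2)) with hfdef
    have hff : f ∘ₗ f = (-((j:ℝ)^2)) • (LinearMap.id : E ((j:ℝ)^2) →ₗ[ℝ] E ((j:ℝ)^2)) := by
      apply LinearMap.ext
      intro z
      apply Subtype.ext
      show B (B (z : H)) = -((j:ℝ)^2) • (z : H)
      have h1 : P ((j:ℝ)^2) (z : H) = (z : H) := hPid _ _ z.2
      have := hBBE j (z : H)
      rwa [h1] at this
    have hdet : LinearMap.det (f ∘ₗ f) = LinearMap.det f * LinearMap.det f :=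
      LinearMap.det_comp f f
    rw [hff, LinearMap.det_smul, LinearMap.det_id, mul_one] at hdet
    rcases Nat.even_or_odd (Module.finrank ℝ (E ((j:ℝ)^2))) with he | ho
    · exact he
    · exfalso
      have hneg : (-((j:ℝ)^2)) ^ Module.finrank ℝ (E ((j:ℝ)^2)) < 0 :=
        Odd.pow_neg ho (by nlinarith [hlam_pos j])
      nlinarith [hdet, sq_nonneg (LinearMap.det f)]
  -- assemble
  refine ⟨Jset, hcount, lam, Bop, hlam_pos, hlam_inj, hfinite, hBop_ne, hBop_skew,
    hBop_cube, hBop_comp, hsum, ?_, ?_, ?_, hker⟩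
  · intro j
    rw [hrange j]
    exact hEfd _ (pow_pos (hlam_pos j) 2)
  · intro j
    rw [hrange j]
    exact heven j
  · intro j k hjk x hx y hy
    rw [hrange j] at hx
    rw [hrange k] at hy
    exact hEorth _ _ (fun h => hjk (Subtype.ext (hsqinj _ _ (hlam_pos j) (hlam_pos k) h)))
      x hx y hy
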